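/- Let p be a positive rational with √p irrational, and let x₁ = a₁ + b₁√p, …, xₙ = aₙ + bₙ√p (n ≥ 2) with all aᵢ, bᵢ ∈ ℚ and all xᵢ > 0. Suppose aᵢ − bᵢ√p < 0 for all i. Then for every z = e + f√p > 0 with e, f ∈ ℚ, f > 0 and |e|/f < max_{1 ≤ i ≤ n} |aᵢ|/bᵢ, the rectangle of aspect ratio z admits a diverse tiling by rectangles with aspect ratios x₁, …, xₙ. -/

import Mathlib

/-- A tiling of the rectangle `[0,1] × [0,r]` by finitely many closed
axis-parallel rectangles with positive side lengths, covering the rectangle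
and having pairwise disjoint interiors. -/
structure RectTiling (r : ℝ) where
  m : ℕ
  px : Fin m → ℝ
  py : Fin m → ℝ
  w : Fin m → ℝ
  h : Fin m → ℝ
  w_pos : ∀ k, 0 < w k
  h_pos : ∀ k, 0 < h k
  cover : (Set.Icc (0:ℝ) 1 ×ˢ Set.Icc (0:ℝ) r) =
      ⋃ k, Set.Icc (px k) (px k + w k) ×ˢ Set.Icc (py k) (py k + h k)
  disj : ∀ k l, k ≠ l →
      Disjoint ((Set.Ioo (px k) (px k + w k)) ×ˢ (Set.Ioo (py k) (py k + h k)))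
               ((Set.Ioo (px l) (px l + w l)) ×ˢ (Set.Ioo (py l) (py l + h l)))

/-- Tile `k` of the tiling `T` has aspect ratio `x` (in one of the two orientations). -/
def RectTiling.ratioOK {r : ℝ} (T : RectTiling r) (k : Fin T.m) (x : ℝ) : Prop :=
  T.h k / T.w k = x ∨ T.w k / T.h k = x

/-- The rectangle of aspect ratio `r` is tileable by rectangles with aspect
ratios among `X`. -/
def Tileable (r : ℝ) {n : ℕ} (X : Fin n → ℝ) : Prop :=
  ∃ T : RectTiling r, ∀ k, ∃ i, T.ratioOK k (X i)

/-- The rectangle of aspect ratio `r` admits a *diverse* tiling by rectangles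
with aspect ratios `X 0, …, X (n-1)`: every tile has some ratio `X i`, and for
every `i` some tile has ratio `X i`. -/
def DiverselyTileable (r : ℝ) {n : ℕ} (X : Fin n → ℝ) : Prop :=
  ∃ T : RectTiling r, (∀ k, ∃ i, T.ratioOK k (X i)) ∧ (∀ i, ∃ k, T.ratioOK k (X i))

namespace RectTiling

variable {r t : ℝ}

lemma tile_subset (T : RectTiling r) (k : Fin T.m) :
    Set.Icc (T.px k) (T.px k + T.w k) ×ˢ Set.Icc (T.py k) (T.py k + T.h k)
      ⊆ Set.Icc (0:ℝ) 1 ×ˢ Set.Icc (0:ℝ) r := by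
  rw [T.cover]; exact Set.subset_iUnion (fun k => Set.Icc (T.px k) (T.px k + T.w k) ×ˢ Set.Icc (T.py k) (T.py k + T.h k)) k

lemma bounds (T : RectTiling r) (k : Fin T.m) :
    0 ≤ T.px k ∧ T.px k + T.w k ≤ 1 ∧ 0 ≤ T.py k ∧ T.py k + T.h k ≤ r := by
  have h1 := T.tile_subset k (Set.mk_mem_prod
    (Set.mem_Icc.2 ⟨le_refl _, by linarith [T.w_pos k]⟩)
    (Set.mem_Icc.2 ⟨le_refl _, by linarith [T.h_pos k]⟩))
  have h2 := T.tile_subset k (Set.mk_mem_prod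
    (Set.mem_Icc.2 ⟨by linarith [T.w_pos k], le_refl _⟩)
    (Set.mem_Icc.2 ⟨by linarith [T.h_pos k], le_refl _⟩))
  obtain ⟨⟨ha, -⟩, hb, -⟩ := h1
  obtain ⟨⟨-, hc⟩, -, hd⟩ := h2
  exact ⟨ha, hc, hb, hd⟩

lemma nonempty_index (T : RectTiling r) (hr : 0 ≤ r) : Nonempty (Fin T.m) := by
  have : ((0:ℝ), (0:ℝ)) ∈ ⋃ k, Set.Icc (T.px k) (T.px k + T.w k) ×ˢ
      Set.Icc (T.py k) (T.py k + T.h k) := by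
    rw [← T.cover]
    exact Set.mk_mem_prod (Set.mem_Icc.2 ⟨le_refl _, zero_le_one⟩)
      (Set.mem_Icc.2 ⟨le_refl _, hr⟩)
  rw [Set.mem_iUnion] at this
  obtain ⟨k, -⟩ := this
  exact ⟨k⟩

def single (r : ℝ) (hr : 0 < r) : RectTiling r where
  m := 1
  px _ := 0
  py _ := 0
  w _ := 1
  h _ := r
  w_pos _ := one_pos
  h_pos _ := hr
  cover := by simp only [zero_add, Set.iUnion_const]
  disj k l hkl := absurd (Subsingleton.elim k l) hkl

@[simp] lemma single_ratioOK (hr : 0 < r) (k : Fin (single r hr).m) :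
    (single r hr).ratioOK k r := Or.inl (by simp [single, ratioOK])

def stack (T₁ : RectTiling r) (T₂ : RectTiling t) (hr : 0 ≤ r) (ht : 0 ≤ t) :
    RectTiling (r + t) where
  m := T₁.m + T₂.m
  px := Fin.addCases T₁.px T₂.px
  py := Fin.addCases T₁.py (fun j => r + T₂.py j)
  w := Fin.addCases T₁.w T₂.w
  h := Fin.addCases T₁.h T₂.h
  w_pos k := by
    induction k using Fin.addCases with
    | left j => simpa using T₁.w_pos j
    | right j => simpa using T₂.w_pos j
  h_pos k := by
    induction k using Fin.addCases with
    | left j => simpa using T₁.h_pos j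
    | right j => simpa using T₂.h_pos j
  cover := by
    ext ⟨X, Y⟩
    simp only [Set.mem_prod, Set.mem_Icc, Set.mem_iUnion]
    constructor
    · rintro ⟨⟨hX0, hX1⟩, hY0, hYr⟩
      rcases le_or_gt Y r with hY | hY
      · have hmem : (X, Y) ∈ Set.Icc (0:ℝ) 1 ×ˢ Set.Icc (0:ℝ) r :=
          Set.mk_mem_prod (Set.mem_Icc.2 ⟨hX0, hX1⟩) (Set.mem_Icc.2 ⟨hY0, hY⟩)
        rw [T₁.cover, Set.mem_iUnion] at hmem
        obtain ⟨k, hk⟩ := hmem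
        obtain ⟨⟨h1, h2⟩, h3, h4⟩ := hk
        exact ⟨Fin.castAdd T₂.m k, by simp [h1, h2, h3, h4]⟩
      · have hmem : (X, Y - r) ∈ Set.Icc (0:ℝ) 1 ×ˢ Set.Icc (0:ℝ) t :=
          Set.mk_mem_prod (Set.mem_Icc.2 ⟨hX0, hX1⟩)
            (Set.mem_Icc.2 ⟨by linarith, by linarith⟩)
        rw [T₂.cover, Set.mem_iUnion] at hmem
        obtain ⟨k, hk⟩ := hmem
        simp only [Set.mem_prod, Set.mem_Icc] at hk
        obtain ⟨⟨h1, h2⟩, h3, h4⟩ := hk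
        refine ⟨Fin.natAdd T₁.m k, ?_⟩
        simp only [Fin.addCases_right]
        exact ⟨⟨h1, h2⟩, by linarith, by linarith⟩
    · rintro ⟨k, hk⟩
      induction k using Fin.addCases with
      | left j =>
        simp only [Fin.addCases_left] at hk
        obtain ⟨⟨h1, h2⟩, h3, h4⟩ := hk
        obtain ⟨b1, b2, b3, b4⟩ := T₁.bounds j
        exact ⟨⟨by linarith, by linarith⟩, by linarith, by linarith⟩
      | right j =>
        simp only [Fin.addCases_right] at hk
        obtain ⟨⟨h1, h2⟩, h3, h4⟩ := hk
        obtain ⟨b1, b2, b3, b4⟩ := T₂.bounds j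
        exact ⟨⟨by linarith, by linarith⟩, by linarith, by linarith⟩
  disj k l hkl := by
    rw [Set.disjoint_left]
    rintro ⟨X, Y⟩ hkmem hlmem
    induction k using Fin.addCases with
    | left j =>
      induction l using Fin.addCases with
      | left j' =>
        have hjj' : j ≠ j' := fun h => hkl (by rw [h])
        simp only [Fin.addCases_left] at hkmem hlmem
        exact Set.disjoint_left.1 (T₁.disj j j' hjj') hkmem hlmem
      | right j' =>
        simp only [Fin.addCases_left, Fin.addCases_right, Set.mem_prod,
          Set.mem_Ioo] at hkmem hlmem
        obtain ⟨-, -, h4⟩ := hkmem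
        obtain ⟨-, h5, -⟩ := hlmem
        obtain ⟨-, -, -, b4⟩ := T₁.bounds j
        obtain ⟨-, -, b3, -⟩ := T₂.bounds j'
        linarith
    | right j =>
      induction l using Fin.addCases with
      | left j' =>
        simp only [Fin.addCases_left, Fin.addCases_right, Set.mem_prod,
          Set.mem_Ioo] at hkmem hlmem
        obtain ⟨-, h5, -⟩ := hkmem
        obtain ⟨-, -, h4⟩ := hlmem
        obtain ⟨-, -, b3, -⟩ := T₂.bounds j
        obtain ⟨-, -, -, b4⟩ := T₁.bounds j'
        linarith
      | right j' =>
        have hjj' : j ≠ j' := fun h => hkl (by rw [h])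
        simp only [Fin.addCases_right, Set.mem_prod, Set.mem_Ioo] at hkmem hlmem
        obtain ⟨⟨h1, h2⟩, h3, h4⟩ := hkmem
        obtain ⟨⟨h5, h6⟩, h7, h8⟩ := hlmem
        refine Set.disjoint_left.1 (T₂.disj j j' hjj')
          (Set.mk_mem_prod (Set.mem_Ioo.2 ⟨h1, h2⟩)
            (Set.mem_Ioo.2 (show T₂.py j < Y - r ∧ Y - r < T₂.py j + T₂.h j from
              ⟨by linarith, by linarith⟩)))
          (Set.mk_mem_prod (Set.mem_Ioo.2 ⟨h5, h6⟩)
            (Set.mem_Ioo.2 (show T₂.py j' < Y - r ∧ Y - r < T₂.py j' + T₂.h j' from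
              ⟨by linarith, by linarith⟩)))

@[simp] lemma stack_ratioOK_left (T₁ : RectTiling r) (T₂ : RectTiling t)
    (hr : 0 ≤ r) (ht : 0 ≤ t) (j : Fin T₁.m) (x : ℝ) :
    (stack T₁ T₂ hr ht).ratioOK (Fin.castAdd T₂.m j) x ↔ T₁.ratioOK j x := by
  simp [stack, ratioOK]

@[simp] lemma stack_ratioOK_right (T₁ : RectTiling r) (T₂ : RectTiling t)
    (hr : 0 ≤ r) (ht : 0 ≤ t) (j : Fin T₂.m) (x : ℝ) :
    (stack T₁ T₂ hr ht).ratioOK (Fin.natAdd T₁.m j) x ↔ T₂.ratioOK j x := by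
  simp [stack, ratioOK]


noncomputable def rot (T : RectTiling r) (hr : 0 < r) : RectTiling r⁻¹ where
  m := T.m
  px k := T.py k / r
  py k := T.px k / r
  w k := T.h k / r
  h k := T.w k / r
  w_pos k := div_pos (T.h_pos k) hr
  h_pos k := div_pos (T.w_pos k) hr
  cover := by
    have H1 : ∀ a X : ℝ, a / r ≤ X ↔ a ≤ r * X := fun a X => by
      rw [div_le_iff₀ hr, mul_comm]
    have H2 : ∀ a X : ℝ, X ≤ a / r ↔ r * X ≤ a := fun a X => by
      rw [le_div_iff₀ hr, mul_comm]
    ext ⟨X, Y⟩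
    have hkey := Set.ext_iff.1 T.cover (r * Y, r * X)
    simp only [Set.mem_prod, Set.mem_Icc, Set.mem_iUnion] at hkey ⊢
    constructor
    · rintro ⟨⟨hX0, hX1⟩, hY0, hYr⟩
      obtain ⟨k, ⟨h1, h2⟩, h3, h4⟩ := hkey.1
        ⟨⟨by positivity, by rw [← H2]; rwa [inv_eq_one_div] at hYr⟩,
         by positivity, by calc r * X ≤ r * 1 := by nlinarith
                               _ = r := mul_one r⟩
      refine ⟨k, ⟨?_, ?_⟩, ?_, ?_⟩
      · rw [H1]; exact h3
      · rw [← add_div, H2]; exact h4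
      · rw [H1]; exact h1
      · rw [← add_div, H2]; exact h2
    · rintro ⟨k, ⟨h1, h2⟩, h3, h4⟩
      rw [← add_div] at h2 h4
      rw [H1] at h1 h3
      rw [H2] at h2 h4
      obtain ⟨b1, b2, b3, b4⟩ := T.bounds k
      have hX0 : 0 ≤ r * Y := by linarith
      have hX1 : r * Y ≤ 1 := by linarith
      have hY0 : 0 ≤ r * X := by linarith
      have hYr : r * X ≤ r := by linarith
      refine ⟨⟨?_, ?_⟩, ?_, ?_⟩
      · nlinarith
      · nlinarith
      · nlinarith
      · rw [inv_eq_one_div, le_div_iff₀ hr]; nlinarith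
  disj k l hkl := by
    have H1 : ∀ a X : ℝ, a / r < X ↔ a < r * X := fun a X => by
      rw [div_lt_iff₀ hr, mul_comm]
    have H2 : ∀ a X : ℝ, X < a / r ↔ r * X < a := fun a X => by
      rw [lt_div_iff₀ hr, mul_comm]
    rw [Set.disjoint_left]
    rintro ⟨X, Y⟩ hkmem hlmem
    simp only [Set.mem_prod, Set.mem_Ioo, ← add_div] at hkmem hlmem
    obtain ⟨⟨h1, h2⟩, h3, h4⟩ := hkmem
    obtain ⟨⟨h5, h6⟩, h7, h8⟩ := hlmem
    rw [H1] at h1 h3 h5 h7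
    rw [H2] at h2 h4 h6 h8
    exact Set.disjoint_left.1 (T.disj k l hkl)
      (Set.mk_mem_prod (Set.mem_Ioo.2 ⟨h3, h4⟩) (Set.mem_Ioo.2 ⟨h1, h2⟩))
      (Set.mk_mem_prod (Set.mem_Ioo.2 ⟨h7, h8⟩) (Set.mem_Ioo.2 ⟨h5, h6⟩))

lemma rot_ratioOK (T : RectTiling r) (hr : 0 < r) (k : Fin T.m) (x : ℝ)
    (h : T.ratioOK k x) : (T.rot hr).ratioOK k x := by
  have hr' : r ≠ 0 := ne_of_gt hr
  have hwne : T.w k ≠ 0 := ne_of_gt (T.w_pos k)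
  have hhne : T.h k ≠ 0 := ne_of_gt (T.h_pos k)
  have hw : (T.w k / r) / (T.h k / r) = T.w k / T.h k := by
    field_simp
  have hh : (T.h k / r) / (T.w k / r) = T.h k / T.w k := by
    field_simp
  rcases h with h | h
  · exact Or.inr (by show (T.h k / r) / (T.w k / r) = x; rw [hh]; exact h)
  · exact Or.inl (by show (T.w k / r) / (T.h k / r) = x; rw [hw]; exact h)

end RectTiling

/-- `[0,1]×[0,r]` can be tiled entirely by rectangles of aspect ratio `x`. -/
def PureTile (r x : ℝ) : Prop := ∃ T : RectTiling r, ∀ k, T.ratioOK k x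

namespace PureTile

lemma self {x : ℝ} (hx : 0 < x) : PureTile x x :=
  ⟨RectTiling.single x hx, fun k => RectTiling.single_ratioOK hx k⟩

lemma add {r t x : ℝ} (hr : 0 < r) (ht : 0 < t) (h1 : PureTile r x) (h2 : PureTile t x) :
    PureTile (r + t) x := by
  obtain ⟨T₁, hT₁⟩ := h1
  obtain ⟨T₂, hT₂⟩ := h2
  refine ⟨T₁.stack T₂ hr.le ht.le, fun k => ?_⟩
  induction k using Fin.addCases with
  | left j => exact (RectTiling.stack_ratioOK_left T₁ T₂ hr.le ht.le j x).2 (hT₁ j)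
  | right j => exact (RectTiling.stack_ratioOK_right T₁ T₂ hr.le ht.le j x).2 (hT₂ j)

lemma inv {r x : ℝ} (hr : 0 < r) (h : PureTile r x) : PureTile r⁻¹ x := by
  obtain ⟨T, hT⟩ := h
  exact ⟨T.rot hr, fun k => T.rot_ratioOK hr k x (hT k)⟩

lemma nsmul {r x : ℝ} (hr : 0 < r) (h : PureTile r x) :
    ∀ m : ℕ, PureTile ((m + 1 : ℕ) * r) x := by
  intro m
  induction m with
  | zero => simpa using h
  | succ j ih =>
      have := add (by positivity) hr ih h
      have heq : ((j + 1 : ℕ) : ℝ) * r + r = ((j + 1 + 1 : ℕ) : ℝ) * r := by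
        push_cast; ring
      rwa [heq] at this

lemma natmul {r x : ℝ} (hr : 0 < r) (h : PureTile r x) {m : ℕ} (hm : 0 < m) :
    PureTile (m * r) x := by
  obtain ⟨j, rfl⟩ := Nat.exists_eq_add_of_lt hm
  simpa using nsmul hr h j

lemma ratmul {r x : ℝ} (q : ℚ) (hq : 0 < q) (hr : 0 < r) (h : PureTile r x) :
    PureTile ((q : ℝ) * r) x := by
  set k : ℕ := q.num.toNat with hk
  have hknum : (k : ℤ) = q.num := Int.toNat_of_nonneg (le_of_lt (Rat.num_pos.2 hq))
  have hkpos : 0 < k := by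
    have := Rat.num_pos.2 hq
    omega
  have hdpos : 0 < q.den := q.pos
  have P1 : PureTile ((k : ℝ) * r) x := natmul hr h hkpos
  have hkr : (0:ℝ) < (k : ℝ) * r := by positivity
  have P2 : PureTile (((k : ℝ) * r)⁻¹) x := inv hkr P1
  have P3 : PureTile ((q.den : ℝ) * ((k : ℝ) * r)⁻¹) x := natmul (by positivity) P2 hdpos
  have P4 : PureTile (((q.den : ℝ) * ((k : ℝ) * r)⁻¹)⁻¹) x := inv (by positivity) P3
  have heq : ((q.den : ℝ) * ((k : ℝ) * r)⁻¹)⁻¹ = (q : ℝ) * r := by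
    have hcast : (q : ℝ) = (k : ℝ) / (q.den : ℝ) := by
      rw [Rat.cast_def]
      congr 1
      exact_mod_cast hknum.symm
    rw [hcast]
    have h1 : ((k : ℝ)) ≠ 0 := by positivity
    have h2 : ((q.den : ℝ)) ≠ 0 := by positivity
    have h3 : r ≠ 0 := ne_of_gt hr
    field_simp
  rwa [heq] at P4

end PureTile

lemma assemble {n : ℕ} (X : Fin n → ℝ) (δw : Fin n → ℝ) (hδw : ∀ i, 0 < δw i)
    (hpure : ∀ i, PureTile (δw i) (X i)) (w : ℝ) (hw : 0 < w)
    (Tw : RectTiling w) (hTw : ∀ k, ∃ i, Tw.ratioOK k (X i)) :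
    ∀ F : Finset (Fin n), ∃ T : RectTiling (w + ∑ i ∈ F, δw i),
      (∀ k, ∃ i, T.ratioOK k (X i)) ∧ (∀ i ∈ F, ∃ k, T.ratioOK k (X i)) := by
  intro F
  induction F using Finset.induction_on with
  | empty =>
      rw [Finset.sum_empty, add_zero]
      exact ⟨Tw, hTw, by simp⟩
  | @insert a F ha ih =>
      obtain ⟨T, hT1, hT2⟩ := ih
      obtain ⟨B, hB⟩ := hpure a
      have hVpos : (0:ℝ) < w + ∑ i ∈ F, δw i :=
        add_pos_of_pos_of_nonneg hw (Finset.sum_nonneg fun i _ => (hδw i).le)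
      have hsum : w + ∑ i ∈ insert a F, δw i = (w + ∑ i ∈ F, δw i) + δw a := by
        rw [Finset.sum_insert ha]; ring
      rw [hsum]
      refine ⟨T.stack B hVpos.le (hδw a).le, fun k => ?_, fun i hi => ?_⟩
      · induction k using Fin.addCases with
        | left j =>
            obtain ⟨i, hi⟩ := hT1 j
            exact ⟨i, (RectTiling.stack_ratioOK_left T B hVpos.le (hδw a).le j _).2 hi⟩
        | right j =>
            exact ⟨a, (RectTiling.stack_ratioOK_right T B hVpos.le (hδw a).le j _).2 (hB j)⟩
      · rcases Finset.mem_insert.1 hi with rfl | hi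
        · obtain ⟨j⟩ := B.nonempty_index (hδw i).le
          exact ⟨Fin.natAdd T.m j,
            (RectTiling.stack_ratioOK_right T B hVpos.le (hδw i).le j _).2 (hB j)⟩
        · obtain ⟨j, hj⟩ := hT2 i hi
          exact ⟨Fin.castAdd B.m j,
            (RectTiling.stack_ratioOK_left T B hVpos.le (hδw a).le j _).2 hj⟩

set_option maxHeartbeats 1000000 in
theorem diverse_tiling_exists_neg_conj_case (p : ℚ) (hp : 0 < p)
    (hirr : Irrational (Real.sqrt p))
    (n : ℕ) (hn : 2 ≤ n) (a b : Fin n → ℚ) (X : Fin n → ℝ)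
    (hX : ∀ i, X i = (a i : ℝ) + (b i : ℝ) * Real.sqrt p)
    (hXpos : ∀ i, 0 < X i)
    (hconj : ∀ i, (a i : ℝ) - (b i : ℝ) * Real.sqrt p < 0)
    (e f : ℚ) (z : ℝ) (hz : z = (e : ℝ) + (f : ℝ) * Real.sqrt p) (hzpos : 0 < z)
    (hf : 0 < f)
    (he : |e| / f < Finset.univ.sup' ⟨⟨0, by omega⟩, Finset.mem_univ _⟩
        (fun i => |a i| / b i)) :
    DiverselyTileable z X := by
  set s := Real.sqrt p with hsdef
  have hppos : (0:ℝ) < (p:ℝ) := by exact_mod_cast hp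
  have hs : 0 < s := Real.sqrt_pos.2 hppos
  have hs2 : s ^ 2 = (p:ℝ) := Real.sq_sqrt hppos.le
  have hbR : ∀ i, (0:ℝ) < (b i : ℝ) := by
    intro i
    have h1 := hXpos i; rw [hX i] at h1
    have h2 := hconj i
    nlinarith
  have hb : ∀ i, 0 < b i := fun i => by exact_mod_cast hbR i
  have habs : ∀ i, |(a i : ℝ)| < (b i : ℝ) * s := by
    intro i
    have h1 := hXpos i; rw [hX i] at h1
    have h2 := hconj i
    rw [abs_lt]; constructor <;> nlinarith
  obtain ⟨i₀, -, hi₀⟩ := (Finset.lt_sup'_iff _).1 he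
  have hb₀ := hb i₀
  have key : |e| * b i₀ < f * |a i₀| := by
    rw [div_lt_div_iff₀ hf hb₀] at hi₀; linarith
  have ha₀pos : 0 < |a i₀| := by nlinarith [abs_nonneg e, mul_nonneg (abs_nonneg e) hb₀.le]
  have ha₀ne : a i₀ ≠ 0 := fun h => by simp [h] at ha₀pos
  -- choose δ
  set A : ℚ := ∑ i, |a i| with hAdef
  set B : ℚ := ∑ i, b i with hBdef
  have hA : 0 ≤ A := Finset.sum_nonneg fun i _ => abs_nonneg _
  have hB : 0 < B := Finset.sum_pos (fun i _ => hb i) ⟨⟨0, by omega⟩, Finset.mem_univ _⟩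
  set g : ℚ := f * |a i₀| - |e| * b i₀ with hgdef
  have hg : 0 < g := by simp only [hgdef]; linarith
  set D : ℚ := A * b i₀ + B * |a i₀| with hDdef
  have hD : 0 ≤ D := add_nonneg (mul_nonneg hA hb₀.le) (mul_nonneg hB.le (abs_nonneg _))
  set δ : ℚ := min (g / (2*(D+1))) (f / (2*B)) with hδdef
  have hδ : 0 < δ := lt_min (div_pos hg (by linarith)) (div_pos hf (by linarith))
  have hδD : δ * D < g := by
    have h1 : δ ≤ g / (2*(D+1)) := min_le_left _ _
    have h2 : δ * D ≤ g / (2*(D+1)) * D := mul_le_mul_of_nonneg_right h1 hD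
    have h3 : g / (2*(D+1)) * D < g := by
      rw [div_mul_eq_mul_div, div_lt_iff₀ (by linarith)]
      nlinarith
    exact lt_of_le_of_lt h2 h3
  have hδB : δ * B < f := by
    have h1 : δ ≤ f / (2*B) := min_le_right _ _
    have h2 : δ * B ≤ f / (2*B) * B := mul_le_mul_of_nonneg_right h1 hB.le
    have h3 : f / (2*B) * B < f := by
      rw [div_mul_eq_mul_div, div_lt_iff₀ (by linarith)]
      nlinarith
    exact lt_of_le_of_lt h2 h3
  set e' : ℚ := e - δ * ∑ i, a i with he'def
  set f' : ℚ := f - δ * B with hf'def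
  have hf' : 0 < f' := by simp only [hf'def]; linarith
  have he'bound : |e'| ≤ |e| + δ * A := by
    have h1 : |∑ i, a i| ≤ A := Finset.abs_sum_le_sum_abs _ _
    calc |e'| ≤ |e| + |δ * ∑ i, a i| := abs_sub _ _
      _ = |e| + δ * |∑ i, a i| := by rw [abs_mul, abs_of_pos hδ]
      _ ≤ |e| + δ * A := by nlinarith
  have he' : |e'| * b i₀ < f' * |a i₀| := by
    have : (|e| + δ * A) * b i₀ < (f - δ * B) * |a i₀| := by
      simp only [hDdef, hgdef] at hδD
      nlinarith
    have h2 : |e'| * b i₀ ≤ (|e| + δ * A) * b i₀ :=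
      mul_le_mul_of_nonneg_right he'bound hb₀.le
    simp only [hf'def]
    linarith
  -- PureTile building blocks from X i₀
  have hx₀ : X i₀ = (a i₀ : ℝ) + (b i₀ : ℝ) * s := hX i₀
  have hx₀pos := hXpos i₀
  have hynegpos : (0:ℝ) < -(a i₀ : ℝ) + (b i₀ : ℝ) * s := by
    have := habs i₀; rw [abs_lt] at this; linarith [this.1]
  have hc : 0 < p * (b i₀)^2 - (a i₀)^2 := by
    have hcR : (0:ℝ) < (p:ℝ) * ((b i₀ : ℝ))^2 - ((a i₀ : ℝ))^2 := by
      have h1 := habs i₀; rw [abs_lt] at h1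
      nlinarith [h1.1, h1.2, hs2]
    exact_mod_cast hcR
  have hyneg_val : (((p * (b i₀)^2 - (a i₀)^2 : ℚ)) : ℝ) * (X i₀)⁻¹
      = -(a i₀ : ℝ) + (b i₀ : ℝ) * s := by
    rw [hx₀]
    have hne : (a i₀ : ℝ) + (b i₀ : ℝ) * s ≠ 0 := by
      rw [← hx₀]; exact ne_of_gt hx₀pos
    rw [mul_inv_eq_iff_eq_mul₀ hne]
    push_cast
    linear_combination (-((b i₀ : ℝ))^2) * hs2
  have Ppos : ∀ q : ℚ, 0 < q →
      PureTile ((q:ℝ) * ((a i₀ : ℝ) + (b i₀ : ℝ) * s)) (X i₀) := by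
    intro q hq
    rw [← hx₀]
    exact PureTile.ratmul q hq hx₀pos (PureTile.self hx₀pos)
  have Pneg : ∀ q : ℚ, 0 < q →
      PureTile ((q:ℝ) * (-(a i₀ : ℝ) + (b i₀ : ℝ) * s)) (X i₀) := by
    intro q hq
    have h1 := PureTile.inv hx₀pos (PureTile.self hx₀pos)
    have h2 := PureTile.ratmul (q * (p * (b i₀)^2 - (a i₀)^2))
      (mul_pos hq hc) (inv_pos.2 hx₀pos) h1
    have heq : ((q * (p * (b i₀)^2 - (a i₀)^2) : ℚ) : ℝ) * (X i₀)⁻¹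
        = (q:ℝ) * (-(a i₀ : ℝ) + (b i₀ : ℝ) * s) := by
      rw [← hyneg_val]; push_cast; ring
    rwa [heq] at h2
  have Psqrt : ∀ q : ℚ, 0 < q → PureTile ((q:ℝ) * s) (X i₀) := by
    intro q hq
    have hq2 : 0 < q / (2 * b i₀) := div_pos hq (by linarith)
    have h1 := Ppos _ hq2
    have h2 := Pneg _ hq2
    have h3 := PureTile.add (mul_pos (by exact_mod_cast hq2) (by rw [← hx₀]; exact hx₀pos))
      (mul_pos (by exact_mod_cast hq2) hynegpos) h1 h2
    have heq : ((q / (2 * b i₀) : ℚ) : ℝ) * ((a i₀ : ℝ) + (b i₀ : ℝ) * s)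
        + ((q / (2 * b i₀) : ℚ) : ℝ) * (-(a i₀ : ℝ) + (b i₀ : ℝ) * s)
        = (q:ℝ) * s := by
      have hb₀ne : ((b i₀ : ℚ) : ℝ) ≠ 0 := by exact_mod_cast hb₀.ne'
      push_cast
      field_simp
      ring
    rwa [heq] at h3
  have hPboth : ∀ α : ℚ, α = a i₀ ∨ α = -(a i₀) → ∀ q : ℚ, 0 < q →
      PureTile ((q:ℝ) * ((α:ℝ) + (b i₀:ℝ) * s)) (X i₀) := by
    rintro α (rfl | rfl) q hq
    · exact Ppos q hq
    · have h := Pneg q hq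
      have hcast : ((-(a i₀) : ℚ) : ℝ) = -(a i₀ : ℝ) := by push_cast; ring
      rw [hcast]
      exact h
  have main_dec : ∀ α : ℚ, (α = a i₀ ∨ α = -(a i₀)) → 0 < e' * α →
      PureTile ((e':ℝ) + (f':ℝ) * s) (X i₀) := by
    intro α hor hsign
    have hα0 : α ≠ 0 := by rintro rfl; simp at hsign
    have hαabs : |α| = |a i₀| := by
      rcases hor with rfl | rfl
      · rfl
      · exact abs_neg _
    have hq : 0 < e' / α := by
      rcases lt_trichotomy α 0 with h | h | h
      · exact div_pos_of_neg_of_neg (by nlinarith) h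
      · exact absurd h hα0
      · exact div_pos (by nlinarith) h
    have hqα : e' / α * α = e' := div_mul_cancel₀ _ hα0
    have hqabs : e' / α * |α| = |e'| := by
      rw [← abs_of_pos hq, ← abs_mul, hqα]
    have hrest : 0 < f' - e' / α * b i₀ := by
      have h1 : e' / α * |a i₀| = |e'| := by rw [← hαabs]; exact hqabs
      nlinarith [ha₀pos, he', hb₀]
    have hαposR : (0:ℝ) < (α:ℝ) + (b i₀:ℝ) * s := by
      have h1 : |(α:ℝ)| = |(a i₀:ℝ)| := by
        rw [← Rat.cast_abs, hαabs, Rat.cast_abs]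
      have h2 := habs i₀
      have h3 := neg_abs_le (α:ℝ)
      nlinarith
    have hsum := PureTile.add (mul_pos (by exact_mod_cast hq) hαposR)
      (mul_pos (by exact_mod_cast hrest) hs)
      (hPboth α hor _ hq) (Psqrt _ hrest)
    have hqαR : ((e' / α : ℚ):ℝ) * (α:ℝ) = (e':ℝ) := by exact_mod_cast hqα
    have hid : ((e' / α : ℚ):ℝ) * ((α:ℝ) + (b i₀:ℝ) * s)
        + ((f' - e' / α * b i₀ : ℚ):ℝ) * s = (e':ℝ) + (f':ℝ) * s := by
      push_cast at hqαR ⊢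
      linear_combination hqαR
    rwa [hid] at hsum
  have hw_pure : PureTile ((e':ℝ) + (f':ℝ) * s) (X i₀) := by
    rcases lt_trichotomy e' 0 with he0 | he0 | he0
    · rcases lt_trichotomy (a i₀) 0 with h | h | h
      · exact main_dec (a i₀) (Or.inl rfl) (mul_pos_of_neg_of_neg he0 h)
      · exact absurd h ha₀ne
      · exact main_dec (-(a i₀)) (Or.inr rfl) (by nlinarith)
    · rw [he0]
      simpa using Psqrt f' hf'
    · rcases lt_trichotomy (a i₀) 0 with h | h | h
      · exact main_dec (-(a i₀)) (Or.inr rfl) (by nlinarith)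
      · exact absurd h ha₀ne
      · exact main_dec (a i₀) (Or.inl rfl) (mul_pos he0 h)
  obtain ⟨Tw, hTw⟩ := hw_pure
  have hwpos : (0:ℝ) < (e':ℝ) + (f':ℝ) * s := by
    have he'R : |(e':ℝ)| * (b i₀:ℝ) < (f':ℝ) * |(a i₀:ℝ)| := by exact_mod_cast he'
    have hf'R : (0:ℝ) < (f':ℝ) := by exact_mod_cast hf'
    nlinarith [habs i₀, neg_abs_le (e':ℝ), hbR i₀, abs_nonneg ((a i₀ : ℚ):ℝ)]
  have hδpos : ∀ i, (0:ℝ) < (δ:ℝ) * X i := fun i =>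
    mul_pos (by exact_mod_cast hδ) (hXpos i)
  have hδpure : ∀ i, PureTile ((δ:ℝ) * X i) (X i) := fun i =>
    PureTile.ratmul δ hδ (hXpos i) (PureTile.self (hXpos i))
  obtain ⟨T, hT1, hT2⟩ := assemble X (fun i => (δ:ℝ) * X i) hδpos hδpure _ hwpos Tw
    (fun k => ⟨i₀, hTw k⟩) Finset.univ
  have hzval : z = ((e':ℝ) + (f':ℝ) * s) + ∑ i, (δ:ℝ) * X i := by
    have hsum : ∑ i, (δ:ℝ) * X i
        = (δ:ℝ) * (∑ i, ((a i : ℚ):ℝ)) + ((δ:ℝ) * (∑ i, ((b i : ℚ):ℝ))) * s := by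
      rw [show ∑ i, (δ:ℝ) * X i
          = ∑ i, ((δ:ℝ) * ((a i : ℚ):ℝ) + ((δ:ℝ) * ((b i : ℚ):ℝ)) * s) from
        Finset.sum_congr rfl fun i _ => by rw [hX i]; ring]
      rw [Finset.sum_add_distrib, ← Finset.mul_sum, ← Finset.sum_mul, ← Finset.mul_sum]
    rw [hz, hsum, he'def, hf'def, hBdef]
    push_cast
    ring
  rw [hzval]
  exact ⟨T, hT1, fun i => hT2 i (Finset.mem_univ i)⟩
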